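/- Let M be a maximal independent set of the Kneser graph on chambers of PG(3,q). If there exist two distinct lines of M-weight (q+1)^2, then every line of a chamber of M passes through the intersection point of the two lines or lies in the plane spanned by them, and there are at least q+1 lines of M-weight (q+1)^2. -/

import Mathlib

open Submodule

/-- A chamber of `PG(3,q)`: a mutually incident point-line-plane triple,
where points, lines and planes are the 1-, 2- and 3-dimensional subspaces
of a 4-dimensional vector space over `F = GF(q)`. -/
structure Chamber (F : Type) [Field F] where
  pt : Submodule F (Fin 4 → F)
  line : Submodule F (Fin 4 → F)
  plane : Submodule F (Fin 4 → F)
  pt_rank : Module.finrank F pt = 1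
  line_rank : Module.finrank F line = 2
  plane_rank : Module.finrank F plane = 3
  pt_le_line : pt ≤ line
  line_le_plane : line ≤ plane

/-- Two chambers are opposite if each point lies outside the other's plane
and the two lines are skew (intersect trivially). -/
def Chamber.Opp {F : Type} [Field F] (c d : Chamber F) : Prop :=
  ¬ c.pt ≤ d.plane ∧ ¬ d.pt ≤ c.plane ∧ c.line ⊓ d.line = ⊥

/-- An independent set of the Kneser graph on chambers: pairwise non-opposite chambers. -/
def IsIndep {F : Type} [Field F] (M : Set (Chamber F)) : Prop :=
  ∀ c ∈ M, ∀ d ∈ M, ¬ c.Opp d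

/-- A maximal independent set of the Kneser graph on chambers. -/
def IsMaxIndep {F : Type} [Field F] (M : Set (Chamber F)) : Prop :=
  IsIndep M ∧ ∀ c : Chamber F, (∀ d ∈ M, ¬ c.Opp d) → c ∈ M

/-- The `M`-weight of a line `l`: the number of chambers of `M` whose line is `l`. -/
noncomputable def wLine {F : Type} [Field F] (M : Set (Chamber F))
    (l : Submodule F (Fin 4 → F)) : ℕ :=
  {c ∈ M | c.line = l}.ncard

/-- The `M`-weight of an incident line-plane pair. -/
noncomputable def wPair {F : Type} [Field F] (M : Set (Chamber F))
    (l π : Submodule F (Fin 4 → F)) : ℕ :=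
  {c ∈ M | c.line = l ∧ c.plane = π}.ncard

/-- The `M`-weight of an incident point-line pair. -/
noncomputable def wPt {F : Type} [Field F] (M : Set (Chamber F))
    (P l : Submodule F (Fin 4 → F)) : ℕ :=
  {c ∈ M | c.pt = P ∧ c.line = l}.ncard

/-- A `π`-line of `M`: a line of weight `≠ (q+1)^2` lying in a plane `π` such that
the pair `(l, π)` has weight `q+1`. -/
def IsPiLine {F : Type} [Field F] [Fintype F] (M : Set (Chamber F))
    (l : Submodule F (Fin 4 → F)) : Prop :=
  Module.finrank F l = 2 ∧ wLine M l ≠ (Fintype.card F + 1)^2 ∧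
    ∃ π : Submodule F (Fin 4 → F), Module.finrank F π = 3 ∧ l ≤ π ∧ wPair M l π = Fintype.card F + 1

/-- A `P`-line of `M`: a line of weight `≠ (q+1)^2` through a point `P` such that
the pair `(P, l)` has weight `q+1`. -/
def IsPLine {F : Type} [Field F] [Fintype F] (M : Set (Chamber F))
    (l : Submodule F (Fin 4 → F)) : Prop :=
  Module.finrank F l = 2 ∧ wLine M l ≠ (Fintype.card F + 1)^2 ∧
    ∃ P : Submodule F (Fin 4 → F), Module.finrank F P = 1 ∧ P ≤ l ∧ wPt M P l = Fintype.card F + 1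


open Module


section Aux

variable {F : Type} [Field F]

instance finite_submodule {R M : Type*} [Semiring R] [AddCommMonoid M] [Module R M]
    [Finite M] : Finite (Submodule R M) :=
  Finite.of_injective (fun p => (p : Set M)) SetLike.coe_injective

instance finite_chamber [Fintype F] : Finite (Chamber F) := by
  apply Finite.of_injective (fun c : Chamber F => (c.pt, c.line, c.plane))
  rintro ⟨⟩ ⟨⟩ h
  simp only [Prod.mk.injEq] at h
  simp only [Chamber.mk.injEq]
  tauto

/-- The number of 1-dimensional subspaces of a 2-dimensional space is `q+1`. -/
lemma card_onedim [Fintype F] (V : Type*) [AddCommGroup V] [Module F V]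
    [FiniteDimensional F V] (hV : finrank F V = 2) :
    Nat.card {H : Submodule F V // finrank F H = 1} = Fintype.card F + 1 := by
  classical
  have e1 : V ≃ₗ[F] (Fin 2 → F) := LinearEquiv.ofFinrankEq V (Fin 2 → F) (by simp [hV])
  have e2 : {H : Submodule F V // finrank F H = 1} ≃
      {H : Submodule F (Fin 2 → F) // finrank F H = 1} :=
    (Submodule.orderIsoMapComap e1).toEquiv.subtypeEquiv (fun H => by
      have h1 : ((Submodule.orderIsoMapComap e1).toEquiv H : Submodule F (Fin 2 → F)) =
          Submodule.map (e1 : V →ₗ[F] Fin 2 → F) H := rfl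
      rw [h1, LinearEquiv.finrank_map_eq])
  rw [Nat.card_congr e2, Nat.card_congr (Projectivization.equivSubmodule F (Fin 2 → F)).symm,
    Nat.card_congr (OnePoint.equivProjectivization F).symm]
  have : Nat.card (OnePoint F) = Nat.card (Option F) := rfl
  rw [this, Nat.card_eq_fintype_card, Fintype.card_option]

/-- Rank-nullity along the quotient map, for submodules above the kernel. -/
lemma finrank_eq_map_mkQ_add {V : Type*} [AddCommGroup V] [Module F V]
    [FiniteDimensional F V] {p π : Submodule F V} (h : p ≤ π) :
    finrank F π = finrank F (Submodule.map p.mkQ π) + finrank F p := by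
  have h1 := LinearMap.finrank_range_add_finrank_ker (p.mkQ.comp π.subtype)
  rw [LinearMap.range_comp, Submodule.range_subtype, LinearMap.ker_comp,
    Submodule.ker_mkQ, (Submodule.comapSubtypeEquivOfLe h).finrank_eq] at h1
  exact h1.symm

lemma map_comap_mkQ {V : Type*} [AddCommGroup V] [Module F V]
    (p : Submodule F V) (H : Submodule F (V ⧸ p)) :
    Submodule.map p.mkQ (Submodule.comap p.mkQ H) = H := by
  rw [Submodule.map_comap_eq, Submodule.range_mkQ, top_inf_eq]

lemma finrank_comap_mkQ {V : Type*} [AddCommGroup V] [Module F V]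
    [FiniteDimensional F V] (p : Submodule F V) (H : Submodule F (V ⧸ p)) :
    finrank F (Submodule.comap p.mkQ H) = finrank F H + finrank F p := by
  have := finrank_eq_map_mkQ_add (Submodule.le_comap_mkQ p H)
  rwa [map_comap_mkQ] at this

/-- The number of points on a line is `q+1`. -/
lemma card_points [Fintype F] {V : Type*} [AddCommGroup V] [Module F V]
    [FiniteDimensional F V] (l : Submodule F V) (hl : finrank F l = 2) :
    Nat.card {P : Submodule F V // finrank F P = 1 ∧ P ≤ l} = Fintype.card F + 1 := by
  have e : {H : Submodule F l // finrank F H = 1} ≃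
      {P : Submodule F V // finrank F P = 1 ∧ P ≤ l} :=
    { toFun := fun H => ⟨Submodule.map l.subtype H.1,
        by rw [Submodule.finrank_map_subtype_eq]; exact H.2, Submodule.map_subtype_le l H.1⟩
      invFun := fun P => ⟨Submodule.comap l.subtype P.1,
        by rw [(Submodule.comapSubtypeEquivOfLe P.2.2).finrank_eq]; exact P.2.1⟩
      left_inv := fun H => by
        ext1
        dsimp only
        rw [Submodule.comap_map_eq, Submodule.ker_subtype, sup_bot_eq]
      right_inv := fun P => by
        ext1
        dsimp only
        rw [Submodule.map_comap_subtype, inf_eq_right.2 P.2.2] }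
  rw [← Nat.card_congr e]
  exact card_onedim _ hl

/-- The number of planes through a line is `q+1`. -/
lemma card_planes [Fintype F] {V : Type*} [AddCommGroup V] [Module F V]
    [FiniteDimensional F V] (hV : finrank F V = 4)
    (l : Submodule F V) (hl : finrank F l = 2) :
    Nat.card {π : Submodule F V // finrank F π = 3 ∧ l ≤ π} = Fintype.card F + 1 := by
  have hQ : finrank F (V ⧸ l) = 2 := by
    have := Submodule.finrank_quotient_add_finrank l
    rw [hl, hV] at this; omega
  have e : {H : Submodule F (V ⧸ l) // finrank F H = 1} ≃
      {π : Submodule F V // finrank F π = 3 ∧ l ≤ π} :=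
    { toFun := fun H => ⟨Submodule.comap l.mkQ H.1,
        by rw [finrank_comap_mkQ, H.2, hl], Submodule.le_comap_mkQ l H.1⟩
      invFun := fun π => ⟨Submodule.map l.mkQ π.1, by
        have := finrank_eq_map_mkQ_add π.2.2
        rw [π.2.1, hl] at this; omega⟩
      left_inv := fun H => by ext1; exact map_comap_mkQ l H.1
      right_inv := fun π => by
        ext1
        dsimp only
        rw [Submodule.comap_map_eq, Submodule.ker_mkQ, sup_eq_left.2 π.2.2] }
  rw [← Nat.card_congr e]
  exact card_onedim _ hQ

/-- The number of chambers on a fixed line is `(q+1)^2`. -/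
lemma card_chambers [Fintype F] {l : Submodule F (Fin 4 → F)} (hl : finrank F l = 2) :
    Nat.card {c : Chamber F // c.line = l} = (Fintype.card F + 1)^2 := by
  have e : {c : Chamber F // c.line = l} ≃
      ({P : Submodule F (Fin 4 → F) // finrank F P = 1 ∧ P ≤ l} ×
       {π : Submodule F (Fin 4 → F) // finrank F π = 3 ∧ l ≤ π}) :=
    { toFun := fun c => (⟨c.1.pt, c.1.pt_rank, le_trans c.1.pt_le_line (le_of_eq c.2)⟩,
        ⟨c.1.plane, c.1.plane_rank, le_trans (le_of_eq c.2.symm) c.1.line_le_plane⟩)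
      invFun := fun x => ⟨⟨x.1.1, l, x.2.1, x.1.2.1, hl, x.2.2.1, x.1.2.2, x.2.2.2⟩, rfl⟩
      left_inv := fun c => by
        obtain ⟨⟨p, li, pl, u1, u2, u3, u4, u5⟩, hc⟩ := c
        subst hc; rfl
      right_inv := fun x => rfl }
  rw [Nat.card_congr e, Nat.card_prod, card_points l hl,
    card_planes (Module.finrank_fin_fun F) l hl, sq]

lemma wLine_eq_iff [Fintype F] (M : Set (Chamber F)) {l : Submodule F (Fin 4 → F)}
    (hl : finrank F l = 2) :
    wLine M l = (Fintype.card F + 1)^2 ↔ ∀ c : Chamber F, c.line = l → c ∈ M := by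
  have hfull : {c : Chamber F | c.line = l}.ncard = (Fintype.card F + 1)^2 := by
    rw [← Nat.card_coe_set_eq]
    exact card_chambers hl
  constructor
  · intro hw c hcl
    have hsub : {c ∈ M | c.line = l} ⊆ {c : Chamber F | c.line = l} := fun c hc => hc.2
    have heq := Set.eq_of_subset_of_ncard_le hsub
      (by rw [hfull]; exact le_of_eq hw.symm) (Set.toFinite _)
    have : c ∈ {c ∈ M | c.line = l} := by rw [heq]; exact hcl
    exact this.1
  · intro hall
    have : {c ∈ M | c.line = l} = {c : Chamber F | c.line = l} := by
      ext c
      exact ⟨fun h => h.2, fun h => ⟨hall c h, h⟩⟩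
    rw [wLine, this, hfull]

lemma exists_point_not_le {V : Type*} [AddCommGroup V] [Module F V]
    {A B : Submodule F V} (h : ¬ A ≤ B) :
    ∃ P : Submodule F V, finrank F P = 1 ∧ P ≤ A ∧ ¬ P ≤ B := by
  obtain ⟨v, hvA, hvB⟩ := SetLike.not_le_iff_exists.mp h
  have hv0 : v ≠ 0 := fun h0 => hvB (h0 ▸ B.zero_mem)
  refine ⟨F ∙ v, finrank_span_singleton hv0, ?_, fun hle => hvB (hle ?_)⟩
  · rwa [Submodule.span_singleton_le_iff_mem]
  · exact Submodule.mem_span_singleton_self v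

lemma exists_plane {V : Type*} [AddCommGroup V] [Module F V] [FiniteDimensional F V]
    (hV : finrank F V = 4) {l P : Submodule F V}
    (hl : finrank F l = 2) (hPl : ¬ P ≤ l) :
    ∃ π : Submodule F V, finrank F π = 3 ∧ l ≤ π ∧ ¬ P ≤ π := by
  obtain ⟨v, hvP, hvl⟩ := SetLike.not_le_iff_exists.mp hPl
  have hQ : finrank F (V ⧸ l) = 2 := by
    have := Submodule.finrank_quotient_add_finrank l
    rw [hl, hV] at this; omega
  set x : V ⧸ l := l.mkQ v with hx
  have hx0 : x ≠ 0 := by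
    simp only [hx, Submodule.mkQ_apply, ne_eq, Submodule.Quotient.mk_eq_zero]
    exact hvl
  have hxne : (F ∙ x) ≠ ⊤ := by
    intro htop
    have : finrank F (F ∙ x) = 1 := finrank_span_singleton hx0
    rw [htop, finrank_top, hQ] at this
    omega
  obtain ⟨y, hy⟩ : ∃ y, y ∉ (F ∙ x) := by
    by_contra hcon
    push_neg at hcon
    exact hxne (Submodule.eq_top_iff'.2 hcon)
  have hy0 : y ≠ 0 := fun h0 => hy (h0 ▸ (F ∙ x).zero_mem)
  have hxW : x ∉ (F ∙ y) := by
    intro hmem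
    have h1 : (F ∙ x) ≤ (F ∙ y) := by rwa [Submodule.span_singleton_le_iff_mem]
    have h2 : (F ∙ x) = (F ∙ y) := Submodule.eq_of_le_of_finrank_le h1
      (by rw [finrank_span_singleton hx0, finrank_span_singleton hy0])
    have hyy : y ∈ (F ∙ y) := Submodule.mem_span_singleton_self y
    rw [← h2] at hyy
    exact hy hyy
  refine ⟨Submodule.comap l.mkQ (F ∙ y), ?_, Submodule.le_comap_mkQ _ _, ?_⟩
  · rw [finrank_comap_mkQ, finrank_span_singleton hy0, hl]
  · intro hle
    exact hxW (hle hvP)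

lemma line_meets [Fintype F] {M : Set (Chamber F)} (hind : IsIndep M)
    {l : Submodule F (Fin 4 → F)} (hl : finrank F l = 2)
    (hall : ∀ d : Chamber F, d.line = l → d ∈ M)
    {c : Chamber F} (hc : c ∈ M) : c.line ⊓ l ≠ ⊥ := by
  intro hskew
  have h1 : ¬ l ≤ c.plane := by
    intro hle
    have hd := Submodule.finrank_sup_add_finrank_inf_eq c.line l
    rw [hskew, finrank_bot, add_zero, c.line_rank, hl] at hd
    have h2 : c.line ⊔ l ≤ c.plane := sup_le c.line_le_plane hle
    have h3 := Submodule.finrank_mono h2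
    rw [hd, c.plane_rank] at h3
    omega
  obtain ⟨P, hP1, hPl, hPc⟩ := exists_point_not_le h1
  have hptl : ¬ c.pt ≤ l := by
    intro hle
    have hb : c.pt ≤ ⊥ := hskew ▸ le_inf c.pt_le_line hle
    rw [le_bot_iff] at hb
    have := c.pt_rank
    rw [hb, finrank_bot] at this
    omega
  obtain ⟨π, hπ3, hlπ, hcptπ⟩ := exists_plane (Module.finrank_fin_fun F) hl hptl
  exact hind c hc ⟨P, l, π, hP1, hl, hπ3, hPl, hlπ⟩ (hall _ rfl) ⟨hcptπ, hPc, hskew⟩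

end Aux

/-- If two distinct lines have `M`-weight `(q+1)^2`, then the line of every chamber
of `M` passes through their intersection point or lies in their common plane, and
there are at least `q+1` lines of weight `(q+1)^2`. -/
theorem two_big_lines {F : Type} [Field F] [Fintype F] {q : ℕ}
    (hq : Fintype.card F = q)
    (M : Set (Chamber F)) (hM : IsMaxIndep M)
    (l₁ l₂ : Submodule F (Fin 4 → F))
    (h₁ : Module.finrank F l₁ = 2) (h₂ : Module.finrank F l₂ = 2)
    (hne : l₁ ≠ l₂)
    (hw₁ : wLine M l₁ = (q + 1)^2) (hw₂ : wLine M l₂ = (q + 1)^2) :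
    (∀ c ∈ M, l₁ ⊓ l₂ ≤ c.line ∨ c.line ≤ l₁ ⊔ l₂) ∧
    q + 1 ≤ {l : Submodule F (Fin 4 → F) |
      Module.finrank F l = 2 ∧ wLine M l = (q + 1)^2}.ncard := by
  subst hq
  have hind := hM.1
  have hall₁ : ∀ c : Chamber F, c.line = l₁ → c ∈ M := (wLine_eq_iff M h₁).mp hw₁
  have hall₂ : ∀ c : Chamber F, c.line = l₂ → c ∈ M := (wLine_eq_iff M h₂).mp hw₂
  -- the two lines meet
  have hmeet : l₁ ⊓ l₂ ≠ ⊥ := by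
    have hne0 : wLine M l₁ ≠ 0 := by
      rw [hw₁]; exact pow_ne_zero _ (Nat.succ_ne_zero _)
    obtain ⟨c, hcM⟩ := Set.nonempty_of_ncard_ne_zero (s := {c ∈ M | c.line = l₁}) hne0
    have h := line_meets hind h₂ hall₂ hcM.1
    rwa [hcM.2] at h
  have hd12 := Submodule.finrank_sup_add_finrank_inf_eq l₁ l₂
  rw [h₁, h₂] at hd12
  have hP1 : finrank F ↥(l₁ ⊓ l₂) = 1 := by
    have hlt : l₁ ⊓ l₂ < l₁ := by
      refine lt_of_le_of_ne inf_le_left ?_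
      intro he
      apply hne
      have hle : l₁ ≤ l₂ := by rw [← he]; exact inf_le_right
      exact Submodule.eq_of_le_of_finrank_le hle (by rw [h₁, h₂])
    have h3 := Submodule.finrank_lt_finrank_of_lt hlt
    rw [h₁] at h3
    have h4 : finrank F ↥(l₁ ⊓ l₂) ≠ 0 := fun h0 => hmeet (Submodule.finrank_eq_zero.mp h0)
    omega
  have hπ3 : finrank F ↥(l₁ ⊔ l₂) = 3 := by omega
  -- part 1
  have part1 : ∀ c ∈ M, l₁ ⊓ l₂ ≤ c.line ∨ c.line ≤ l₁ ⊔ l₂ := by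
    intro c hc
    by_cases hπ : c.line ≤ l₁ ⊔ l₂
    · exact Or.inr hπ
    refine Or.inl ?_
    have hA : c.line ⊓ l₁ ≠ ⊥ := line_meets hind h₁ hall₁ hc
    have hB : c.line ⊓ l₂ ≠ ⊥ := line_meets hind h₂ hall₂ hc
    have hA1 : finrank F ↥(c.line ⊓ l₁) = 1 := by
      have hlt : c.line ⊓ l₁ < c.line := by
        refine lt_of_le_of_ne inf_le_left ?_
        intro he
        apply hπ
        have : c.line ≤ l₁ := by rw [← he]; exact inf_le_right
        exact le_trans this le_sup_left
      have h3 := Submodule.finrank_lt_finrank_of_lt hlt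
      rw [c.line_rank] at h3
      have h4 : finrank F ↥(c.line ⊓ l₁) ≠ 0 := fun h0 => hA (Submodule.finrank_eq_zero.mp h0)
      omega
    have hB1 : finrank F ↥(c.line ⊓ l₂) = 1 := by
      have hlt : c.line ⊓ l₂ < c.line := by
        refine lt_of_le_of_ne inf_le_left ?_
        intro he
        apply hπ
        have : c.line ≤ l₂ := by rw [← he]; exact inf_le_right
        exact le_trans this le_sup_right
      have h3 := Submodule.finrank_lt_finrank_of_lt hlt
      rw [c.line_rank] at h3
      have h4 : finrank F ↥(c.line ⊓ l₂) ≠ 0 := fun h0 => hB (Submodule.finrank_eq_zero.mp h0)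
      omega
    by_cases hAB : c.line ⊓ l₁ = c.line ⊓ l₂
    · have hle : c.line ⊓ l₁ ≤ l₁ ⊓ l₂ :=
        le_inf inf_le_right (by rw [hAB]; exact inf_le_right)
      have heq : c.line ⊓ l₁ = l₁ ⊓ l₂ :=
        Submodule.eq_of_le_of_finrank_le hle (by rw [hP1, hA1])
      rw [← heq]
      exact inf_le_left
    · exfalso
      have hbot : (c.line ⊓ l₁) ⊓ (c.line ⊓ l₂) = ⊥ := by
        by_contra hb
        have h0 : finrank F ↥((c.line ⊓ l₁) ⊓ (c.line ⊓ l₂)) ≠ 0 :=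
          fun h0 => hb (Submodule.finrank_eq_zero.mp h0)
        have e1 : (c.line ⊓ l₁) ⊓ (c.line ⊓ l₂) = c.line ⊓ l₁ :=
          Submodule.eq_of_le_of_finrank_le inf_le_left (by rw [hA1]; omega)
        have e2 : (c.line ⊓ l₁) ⊓ (c.line ⊓ l₂) = c.line ⊓ l₂ :=
          Submodule.eq_of_le_of_finrank_le inf_le_right (by rw [hB1]; omega)
        exact hAB (e1.symm.trans e2)
      have hsup := Submodule.finrank_sup_add_finrank_inf_eq (c.line ⊓ l₁) (c.line ⊓ l₂)
      rw [hbot, finrank_bot, add_zero, hA1, hB1] at hsup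
      have hsupeq : (c.line ⊓ l₁) ⊔ (c.line ⊓ l₂) = c.line :=
        Submodule.eq_of_le_of_finrank_le (sup_le inf_le_left inf_le_left)
          (by rw [c.line_rank, hsup])
      apply hπ
      rw [← hsupeq]
      exact sup_le (le_trans inf_le_right le_sup_left) (le_trans inf_le_right le_sup_right)
  refine ⟨part1, ?_⟩
  -- part 2
  have hPle : l₁ ⊓ l₂ ≤ l₁ ⊔ l₂ := le_trans inf_le_left le_sup_left
  have hW2 : finrank F (Submodule.map (l₁ ⊓ l₂).mkQ (l₁ ⊔ l₂)) = 2 := by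
    have h := finrank_eq_map_mkQ_add hPle
    rw [hπ3, hP1] at h
    omega
  have pencil : ∀ l : Submodule F (Fin 4 → F), finrank F l = 2 → l₁ ⊓ l₂ ≤ l →
      l ≤ l₁ ⊔ l₂ → wLine M l = (Fintype.card F + 1)^2 := by
    intro l hl hPl hlπ
    rw [wLine_eq_iff M hl]
    intro d hd
    apply hM.2
    intro c hc hopp
    obtain ⟨-, -, hbot⟩ := hopp
    rw [hd] at hbot
    rcases part1 c hc with hcase | hcase
    · have hPb : l₁ ⊓ l₂ ≤ ⊥ := by rw [← hbot]; exact le_inf hPl hcase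
      rw [le_bot_iff] at hPb
      rw [hPb, finrank_bot] at hP1
      omega
    · have hdim := Submodule.finrank_sup_add_finrank_inf_eq l c.line
      rw [hbot, finrank_bot, add_zero, hl, c.line_rank] at hdim
      have h3 := Submodule.finrank_mono (sup_le hlπ hcase)
      rw [hdim, hπ3] at h3
      omega
  have key : ∀ X : Submodule F ((Fin 4 → F) ⧸ (l₁ ⊓ l₂)), finrank F X = 1 →
      X ≤ Submodule.map (l₁ ⊓ l₂).mkQ (l₁ ⊔ l₂) →
      finrank F (Submodule.comap (l₁ ⊓ l₂).mkQ X) = 2 ∧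
        wLine M (Submodule.comap (l₁ ⊓ l₂).mkQ X) = (Fintype.card F + 1)^2 := by
    intro X hX1 hXW
    have hr : finrank F (Submodule.comap (l₁ ⊓ l₂).mkQ X) = 2 := by
      rw [finrank_comap_mkQ, hX1, hP1]
    have hle1 : l₁ ⊓ l₂ ≤ Submodule.comap (l₁ ⊓ l₂).mkQ X := Submodule.le_comap_mkQ _ _
    have hle2 : Submodule.comap (l₁ ⊓ l₂).mkQ X ≤ l₁ ⊔ l₂ := by
      have h := Submodule.comap_mono (f := (l₁ ⊓ l₂).mkQ) hXW
      rwa [Submodule.comap_map_eq, Submodule.ker_mkQ, sup_eq_left.2 hPle] at h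
    exact ⟨hr, pencil _ hr hle1 hle2⟩
  have hsrc := card_points (Submodule.map (l₁ ⊓ l₂).mkQ (l₁ ⊔ l₂)) hW2
  rw [← Nat.card_coe_set_eq]
  refine le_trans (le_of_eq hsrc.symm) ?_
  refine Nat.card_le_card_of_injective
    (fun X : {P : Submodule F ((Fin 4 → F) ⧸ (l₁ ⊓ l₂)) //
        finrank F P = 1 ∧ P ≤ Submodule.map (l₁ ⊓ l₂).mkQ (l₁ ⊔ l₂)} =>
      ⟨Submodule.comap (l₁ ⊓ l₂).mkQ X.1,
        (key X.1 X.2.1 X.2.2).1, (key X.1 X.2.1 X.2.2).2⟩) ?_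
  intro X Y h
  have h' : Submodule.comap (l₁ ⊓ l₂).mkQ X.1 = Submodule.comap (l₁ ⊓ l₂).mkQ Y.1 :=
    congrArg Subtype.val h
  have h'' := congrArg (Submodule.map (l₁ ⊓ l₂).mkQ) h'
  rw [map_comap_mkQ, map_comap_mkQ] at h''
  exact Subtype.ext h''
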